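/- For each n ≥ 2, the sequence λ_n of largest real roots of LT_n(x) = x^{2n} - x^{n+1} - x^n - x^{n-1} + 1 is strictly decreasing and converges to 1. -/

import Mathlib

open Filter

/-- If `b > 1` is a root of `LT_n` and `m < n`, then `LT_m(b) < 0`. -/
lemma LT_neg (m n : ℕ) (b : ℝ) (hb : 1 < b) (hm : 1 ≤ m) (hmn : m < n)
    (heq : b ^ (2*n) - b^(n+1) - b^n - b^(n-1) + 1 = 0) :
    b^(2*m) - b^(m+1) - b^m - b^(m-1) + 1 < 0 := by
  have hb0 : (0:ℝ) < b := by linarith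
  have e1 : b^(n-m) * b^(n+m) = b^(2*n) := by rw [← pow_add]; congr 1; omega
  have e2 : b^(2*m) * b^(n-m) = b^(n+m) := by rw [← pow_add]; congr 1; omega
  have e3 : b^(m+1) * b^(n-m) = b^(n+1) := by rw [← pow_add]; congr 1; omega
  have e4 : b^m * b^(n-m) = b^n := by rw [← pow_add]; congr 1; omega
  have e5 : b^(m-1) * b^(n-m) = b^(n-1) := by rw [← pow_add]; congr 1; omega
  have hu : 1 < b^(n-m) := one_lt_pow₀ hb (by omega)
  have hv : 1 < b^(n+m) := one_lt_pow₀ hb (by omega)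
  have expand : (b^(2*m) - b^(m+1) - b^m - b^(m-1) + 1) * b^(n-m)
      = b^(n+m) - b^(n+1) - b^n - b^(n-1) + b^(n-m) := by
    rw [← e2, ← e3, ← e4, ← e5]; ring
  have hprod : (0:ℝ) < (b^(n-m) - 1) * (b^(n+m) - 1) :=
    mul_pos (by linarith) (by linarith)
  have hneg : (b^(2*m) - b^(m+1) - b^m - b^(m-1) + 1) * b^(n-m) < 0 := by
    rw [expand]; nlinarith [e1]
  by_contra h
  push_neg at h
  nlinarith [pow_pos hb0 (n-m)]

lemma LT_hasDeriv (m : ℕ) (hm : 2 ≤ m) (x : ℝ) :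
    HasDerivAt (fun x : ℝ => x^(2*m) - x^(m+1) - x^m - x^(m-1) + 1)
      ((2*m : ℝ) * x^(2*m-1) - ((m:ℝ)+1)*x^m - (m:ℝ)*x^(m-1) - ((m:ℝ)-1)*x^(m-2)) x := by
  have h1 := hasDerivAt_pow (2*m) x
  have h2 := hasDerivAt_pow (m+1) x
  have h3 := hasDerivAt_pow m x
  have h4 := hasDerivAt_pow (m-1) x
  have H := (((h1.sub h2).sub h3).sub h4).add_const 1
  convert H using 1
  rfl
  rfl
  rfl
  have : m + 1 - 1 = m := by omega
  rw [this]
  have : m - 1 - 1 = m - 2 := by omega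
  rw [this]
  have : ((m:ℝ) - 1) = ((m - 1 : ℕ) : ℝ) := by
    have : (1:ℕ) ≤ m := by omega
    push_cast [Nat.cast_sub this]
    ring
  rw [this]
  push_cast
  ring

/-- `LT_m` is monotone on `[a, ∞)` where `a > 1` is its root. -/
lemma LT_monoOn (m : ℕ) (hm : 2 ≤ m) (a : ℝ) (ha : 1 < a)
    (heq : a^(2*m) - a^(m+1) - a^m - a^(m-1) + 1 = 0) :
    MonotoneOn (fun x : ℝ => x^(2*m) - x^(m+1) - x^m - x^(m-1) + 1) (Set.Ici a) := by
  have ha0 : (0:ℝ) < a := by linarith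
  have h1m : (1:ℝ) < a^(m-1) := one_lt_pow₀ ha (by omega)
  have eam : a^(2*m) = a^m * a^m := by rw [← pow_add]; congr 1; omega
  have eam1 : a^(m+1) = a * a^m := by rw [← pow_succ']
  have eam2 : a^m = a * a^(m-1) := by rw [← pow_succ']; congr 1; omega
  have hpow : a + 1 < a^m := by
    have hmm : a^m * a^m > a * a^m + a^m := by nlinarith
    have hampos : (0:ℝ) < a^m := pow_pos ha0 m
    nlinarith
  have hkey : (3:ℝ)/2 ≤ a^(m-1) := by
    rcases le_or_gt a 2 with h2 | h2
    · nlinarith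
    · have : a ≤ a^(m-1) := le_self_pow₀ (by linarith) (by omega)
      linarith
  apply monotoneOn_of_deriv_nonneg (convex_Ici a)
  · exact (Continuous.continuousOn (by continuity))
  · intro x hx
    exact ((LT_hasDeriv m hm x).differentiableAt).differentiableWithinAt
  · intro x hx
    rw [interior_Ici] at hx
    have hax : a < x := hx
    have hx1 : (1:ℝ) < x := lt_trans ha hax
    have hx0 : (0:ℝ) < x := by linarith
    rw [(LT_hasDeriv m hm x).deriv]
    have hxm1 : (3:ℝ)/2 ≤ x^(m-1) := by
      calc (3:ℝ)/2 ≤ a^(m-1) := hkey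
        _ ≤ x^(m-1) := pow_le_pow_left₀ (le_of_lt ha0) (le_of_lt hax) _
    have hxm : (0:ℝ) < x^m := pow_pos hx0 m
    have e1 : x^(2*m-1) = x^(m-1) * x^m := by rw [← pow_add]; congr 1; omega
    have e2 : x^(m-1) ≤ x^m := pow_le_pow_right₀ (le_of_lt hx1) (by omega)
    have e3 : x^(m-2) ≤ x^m := pow_le_pow_right₀ (le_of_lt hx1) (by omega)
    have hm1 : (1:ℝ) ≤ (m:ℝ) := by exact_mod_cast Nat.one_le_iff_ne_zero.2 (by omega)
    have hxm2 : (0:ℝ) < x^(m-2) := pow_pos hx0 _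
    have hxm1' : (0:ℝ) < x^(m-1) := pow_pos hx0 _
    rw [e1]
    nlinarith [mul_le_mul_of_nonneg_left e2 (le_of_lt (by positivity : (0:ℝ) < (m:ℝ))),
      mul_le_mul_of_nonneg_left e3 (by linarith : (0:ℝ) ≤ (m:ℝ)-1),
      mul_le_mul_of_nonneg_left hxm1 (by positivity : (0:ℝ) ≤ 2*(m:ℝ)*x^m)]

theorem LT_root_strict_anti_tendsto_one (lam : ℕ → ℝ)
    (hlam : ∀ n, 2 ≤ n → 1 < lam n ∧
      (lam n) ^ (2 * n) - (lam n) ^ (n + 1) - (lam n) ^ n - (lam n) ^ (n - 1) + 1 = 0) :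
    (∀ m n : ℕ, 2 ≤ m → m < n → lam n < lam m) ∧
      Tendsto lam atTop (nhds 1) := by
  constructor
  · intro m n hm hmn
    obtain ⟨ham, heqm⟩ := hlam m hm
    obtain ⟨han, heqn⟩ := hlam n (by omega)
    have hneg : (lam n)^(2*m) - (lam n)^(m+1) - (lam n)^m - (lam n)^(m-1) + 1 < 0 :=
      LT_neg m n (lam n) han (by omega) hmn heqn
    by_contra h
    push_neg at h
    have hmono := LT_monoOn m hm (lam m) ham heqm
    have := hmono (Set.self_mem_Ici) (by exact h) h
    simp only at this
    rw [heqm] at this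
    linarith
  · rw [tendsto_order]
    constructor
    · intro c hc
      filter_upwards [eventually_ge_atTop 2] with n hn
      exact lt_trans hc (hlam n hn).1
    · intro c hc
      obtain ⟨N, hN⟩ := pow_unbounded_of_one_lt (3:ℝ) hc
      filter_upwards [eventually_ge_atTop (N+2)] with n hn
      obtain ⟨hx1, heq⟩ := hlam n (by omega)
      set x := lam n with hxdef
      have hx0 : (0:ℝ) < x := by linarith
      have e1 : x^(2*n) = x^(n-1) * x^(n+1) := by rw [← pow_add]; congr 1; omega
      have e2 : x^n ≤ x^(n+1) := pow_le_pow_right₀ (le_of_lt hx1) (by omega)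
      have e3 : x^(n-1) ≤ x^(n+1) := pow_le_pow_right₀ (le_of_lt hx1) (by omega)
      have hxp : (0:ℝ) < x^(n+1) := pow_pos hx0 _
      have h3 : x^(n-1) * x^(n+1) < 3 * x^(n+1) := by nlinarith
      have hxn1 : x^(n-1) < 3 := lt_of_mul_lt_mul_right (by linarith) (le_of_lt hxp)
      by_contra h
      push_neg at h
      have hbN : c^N ≤ c^(n-1) := pow_le_pow_right₀ (le_of_lt hc) (by omega)
      have : c^(n-1) ≤ x^(n-1) := pow_le_pow_left₀ (by linarith) h _
      linarith
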